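/- For coprime positive integers h, k with 0 < h < k, the Dedekind sum satisfies the reciprocity law s(h,k) + s(k,h) = −1/4 + (1/12)( h/k + k/h + 1/(hk) ). -/

import Mathlib

open Finset

/-- The Dedekind sum `s(h, k)`. -/
noncomputable def dedekindSum (h k : ℕ) : ℝ :=
  ∑ i ∈ Finset.Ico 1 k,
    (i : ℝ) / k * ((h * i : ℝ) / k - ⌊(h * i : ℝ) / k⌋ - 1 / 2)

lemma sum_Ico_id_real (n : ℕ) : ∑ i ∈ Ico 1 n, (i : ℝ) = n * (n - 1) / 2 := by
  induction n with
  | zero => simp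
  | succ n ih =>
    rcases Nat.eq_zero_or_pos n with rfl | hn
    · simp
    · rw [Finset.sum_Ico_succ_top hn, ih]
      have : (1:ℝ) ≤ n := by exact_mod_cast hn
      push_cast
      ring

lemma sum_Ico_sq_real (n : ℕ) : ∑ i ∈ Ico 1 n, (i : ℝ)^2 = n * (n - 1) * (2*n - 1) / 6 := by
  induction n with
  | zero => simp
  | succ n ih =>
    rcases Nat.eq_zero_or_pos n with rfl | hn
    · simp
    · rw [Finset.sum_Ico_succ_top hn, ih]
      push_cast
      ring

/-- Multiplication by a unit mod `n` permutes `Ico 1 n`. -/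
lemma perm_sum (a n : ℕ) (ha : 0 < a) (hn : 0 < n) (hc : Nat.Coprime a n) (f : ℕ → ℝ) :
    ∑ i ∈ Ico 1 n, f (a * i % n) = ∑ i ∈ Ico 1 n, f i := by
  rcases eq_or_lt_of_le (show 1 ≤ n from hn) with h1 | h1
  · simp [← h1]
  obtain ⟨b, -, hb⟩ := Nat.exists_mul_mod_eq_one_of_coprime hc h1
  have hab : a * b ≡ 1 [MOD n] := by
    unfold Nat.ModEq; rw [hb, Nat.mod_eq_of_lt h1]
  have mem : ∀ c : ℕ, 0 < c → Nat.Coprime c n → ∀ i ∈ Ico 1 n, c * i % n ∈ Ico 1 n := by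
    intro c hc0 hcc i hi
    simp only [mem_Ico] at hi ⊢
    refine ⟨Nat.one_le_iff_ne_zero.2 ?_, Nat.mod_lt _ hn⟩
    intro h0
    have hdvd : n ∣ c * i := Nat.dvd_of_mod_eq_zero h0
    have : n ∣ i := (Nat.Coprime.dvd_of_dvd_mul_left (hcc.symm) hdvd)
    have := Nat.le_of_dvd (lt_of_lt_of_le Nat.zero_lt_one hi.1) this
    omega
  have hcb : Nat.Coprime b n := by
    have h1' : Nat.gcd b n ∣ a * b := (Nat.gcd_dvd_left b n).mul_left a
    have h2' : Nat.gcd b n ∣ n * (a * b / n) := (Nat.gcd_dvd_right b n).mul_right _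
    have h3 := Nat.div_add_mod (a * b) n
    rw [hb] at h3
    have h4 : a * b - n * (a * b / n) = 1 := by omega
    have : Nat.gcd b n ∣ 1 := h4 ▸ Nat.dvd_sub h1' h2'
    exact Nat.eq_one_of_dvd_one this
  have hb0 : 0 < b := by
    rcases Nat.eq_zero_or_pos b with rfl | h
    · rw [mul_zero, Nat.zero_mod] at hb; omega
    · exact h
  have key : ∀ c d : ℕ, c * d ≡ 1 [MOD n] → ∀ i ∈ Ico 1 n, d * (c * i % n) % n = i := by
    intro c d hcd i hi
    simp only [mem_Ico] at hi
    have : d * (c * i % n) ≡ i [MOD n] := by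
      calc d * (c * i % n) ≡ d * (c * i) [MOD n] := (Nat.mod_modEq _ _).mul_left d
        _ = c * d * i := by ring
        _ ≡ 1 * i [MOD n] := hcd.mul_right i
        _ = i := one_mul i
    unfold Nat.ModEq at this
    rwa [Nat.mod_eq_of_lt hi.2] at this
  exact Finset.sum_nbij' (fun i => a * i % n) (fun i => b * i % n)
    (mem a ha hc) (mem b hb0 hcb) (key a b hab) (key b a (by rwa [mul_comm] at hab))
    (fun i _ => rfl)

lemma filter_mul_le (p q N : ℕ) (hq : 0 < q) (hN : p / q + 1 ≤ N) :
    (Ico 1 N).filter (fun j => q * j ≤ p) = Ico 1 (p / q + 1) := by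
  ext j
  simp only [mem_filter, mem_Ico]
  constructor
  · rintro ⟨⟨h1, _⟩, h2⟩
    exact ⟨h1, Nat.lt_succ_of_le ((Nat.le_div_iff_mul_le hq).2 (by rwa [mul_comm]))⟩
  · rintro ⟨h1, h2⟩
    have h3 := (Nat.le_div_iff_mul_le hq).1 (Nat.lt_succ_iff.1 h2)
    exact ⟨⟨h1, by omega⟩, by rwa [mul_comm] at h3⟩

lemma filter_mul_lt (p q N : ℕ) (hq : 0 < q) (hN : p / q + 1 ≤ N) (hnd : ¬ q ∣ p) :
    (Ico 1 N).filter (fun j => q * j < p) = Ico 1 (p / q + 1) := by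
  rw [← filter_mul_le p q N hq hN]
  apply Finset.filter_congr
  intro j _
  constructor
  · exact le_of_lt
  · intro hle
    refine lt_of_le_of_ne hle ?_
    intro heq
    exact hnd ⟨j, heq.symm⟩

lemma ded_eq (a b : ℕ) (hb : 0 < b) : dedekindSum a b =
    (∑ i ∈ Ico 1 b, (i : ℝ) * ((a * i % b : ℕ) : ℝ)) / b ^ 2 - ((b : ℝ) - 1) / 4 := by
  have hbR : (b : ℝ) ≠ 0 := Nat.cast_ne_zero.2 hb.ne'
  unfold dedekindSum
  have hterm : ∀ i ∈ Ico 1 b, (i : ℝ) / b * ((a * i : ℝ) / b - ⌊(a * i : ℝ) / b⌋ - 1 / 2)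
      = (i : ℝ) * ((a * i % b : ℕ) : ℝ) / b ^ 2 - (i : ℝ) / (2 * b) := by
    intro i _
    have hx : (0 : ℝ) ≤ (a * i : ℝ) / b := by positivity
    have h1 : (⌊(a * i : ℝ) / b⌋ : ℝ) = ((a * i / b : ℕ) : ℝ) := by
      rw [← natCast_floor_eq_intCast_floor hx]
      congr 1
      have : ((a * i : ℝ)) / b = (((a * i : ℕ) : ℝ)) / ((b : ℕ) : ℝ) := by push_cast; ring
      rw [this, Nat.floor_div_eq_div]
    rw [h1]
    have h2 := Nat.div_add_mod (a * i) b
    have h2' : ((a * i : ℕ) : ℝ) = (b : ℝ) * ((a * i / b : ℕ) : ℝ) + ((a * i % b : ℕ) : ℝ) := by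
      exact_mod_cast congrArg (Nat.cast : ℕ → ℝ) h2.symm
    have h3 : ((a : ℝ) * i) / b - ((a * i / b : ℕ) : ℝ) = ((a * i % b : ℕ) : ℝ) / b := by
      rw [div_sub' hbR, div_eq_div_iff hbR hbR]
      push_cast at h2' ⊢
      linear_combination (b:ℝ) * h2'
    push_cast at h3 ⊢
    rw [show (a:ℝ) * i / b - (a * i / b : ℕ) - 1/2 = ((a:ℝ) * i / b - (a * i / b : ℕ)) - 1/2 by ring, h3]
    field_simp
  rw [Finset.sum_congr rfl hterm, Finset.sum_sub_distrib]
  rw [← Finset.sum_div, ← Finset.sum_div, sum_Ico_id_real]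
  field_simp
  ring

lemma cross_sum (h k : ℕ) (h0 : 0 < h) (hhk : h < k) (hcop : Nat.Coprime h k) :
    (∑ j ∈ Ico 1 h, (j : ℝ) * ((k * j / h : ℕ) : ℝ))
      + ∑ i ∈ Ico 1 k, ((h * i / k : ℕ) : ℝ) * (((h * i / k : ℕ) : ℝ) + 1) / 2
    = (∑ j ∈ Ico 1 h, (j : ℝ)) * ((k : ℝ) - 1) := by
  have hk0 : 0 < k := h0.trans hhk
  have swap := Finset.sum_comm (s := Ico 1 k) (t := Ico 1 h)
    (f := fun i j => if h * i ≤ k * j then (0:ℝ) else (j : ℝ))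
  have side1 : ∀ i ∈ Ico 1 k,
      (∑ j ∈ Ico 1 h, if h * i ≤ k * j then (0:ℝ) else (j : ℝ))
        = ((h * i / k : ℕ) : ℝ) * (((h * i / k : ℕ) : ℝ) + 1) / 2 := by
    intro i hi
    simp only [mem_Ico] at hi
    have hnd : ¬ k ∣ h * i := by
      intro hd
      have h5 : k ∣ i := Nat.Coprime.dvd_of_dvd_mul_left hcop.symm hd
      have := Nat.le_of_dvd (by omega) h5
      omega
    have hN : h * i / k + 1 ≤ h := by
      have : h * i / k < h := (Nat.div_lt_iff_lt_mul hk0).2 (by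
        exact Nat.mul_lt_mul_of_le_of_lt (le_refl h) hi.2 h0)
      omega
    calc (∑ j ∈ Ico 1 h, if h * i ≤ k * j then (0:ℝ) else (j : ℝ))
        = ∑ j ∈ (Ico 1 h).filter (fun j => k * j < h * i), (j : ℝ) := by
          rw [Finset.sum_filter]
          apply Finset.sum_congr rfl
          intro j _
          by_cases hc : k * j < h * i
          · rw [if_pos hc, if_neg (by omega)]
          · rw [if_neg hc, if_pos (by omega)]
      _ = ∑ j ∈ Ico 1 (h * i / k + 1), (j : ℝ) := by
          rw [filter_mul_lt (h * i) k h hk0 hN hnd]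
      _ = _ := by
          rw [sum_Ico_id_real]
          push_cast
          ring
  have side2 : ∀ j ∈ Ico 1 h,
      (∑ i ∈ Ico 1 k, if h * i ≤ k * j then (0:ℝ) else (j : ℝ))
        = (j : ℝ) * ((k : ℝ) - 1) - (j : ℝ) * ((k * j / h : ℕ) : ℝ) := by
    intro j hj
    simp only [mem_Ico] at hj
    have hN : k * j / h + 1 ≤ k := by
      have : k * j / h < k := (Nat.div_lt_iff_lt_mul h0).2 (by
        exact Nat.mul_lt_mul_of_le_of_lt (le_refl k) hj.2 hk0)
      omega
    calc (∑ i ∈ Ico 1 k, if h * i ≤ k * j then (0:ℝ) else (j : ℝ))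
        = ∑ i ∈ Ico 1 k, ((j : ℝ) - if h * i ≤ k * j then (j:ℝ) else 0) := by
          apply Finset.sum_congr rfl
          intro i _
          split_ifs <;> ring
      _ = (∑ i ∈ Ico 1 k, (j : ℝ))
            - ∑ i ∈ (Ico 1 k).filter (fun i => h * i ≤ k * j), (j : ℝ) := by
          rw [Finset.sum_sub_distrib, Finset.sum_filter]
      _ = ((k : ℝ) - 1) * j - ((k * j / h : ℕ) : ℝ) * j := by
          rw [filter_mul_le (k * j) h k h0 hN]
          rw [Finset.sum_const, Finset.sum_const, Nat.card_Ico, Nat.card_Ico]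
          simp only [nsmul_eq_mul]
          push_cast [Nat.cast_sub hk0]
          ring
      _ = _ := by ring
  rw [Finset.sum_congr rfl side1] at swap
  rw [Finset.sum_congr rfl side2] at swap
  rw [Finset.sum_sub_distrib] at swap
  rw [← Finset.sum_mul] at swap
  linarith [swap]

theorem dedekindSum_reciprocity (h k : ℕ) (h0 : 0 < h) (hhk : h < k)
    (hcop : Nat.Coprime h k) :
    dedekindSum h k + dedekindSum k h =
      -(1 / 4) + 1 / 12 * ((h : ℝ) / k + (k : ℝ) / h + 1 / ((h : ℝ) * k)) := by
  have hk0 : 0 < k := h0.trans hhk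
  have hkR : (k:ℝ) ≠ 0 := Nat.cast_ne_zero.2 hk0.ne'
  have hhR : (h:ℝ) ≠ 0 := Nat.cast_ne_zero.2 h0.ne'
  have hpt : ∀ a b i : ℕ, ((a * i % b : ℕ) : ℝ)
      = (a:ℝ) * (i:ℝ) - (b:ℝ) * ((a * i / b : ℕ) : ℝ) := by
    intro a b i
    have h2 : ((b:ℝ)) * ((a * i / b : ℕ) : ℝ) + ((a * i % b : ℕ) : ℝ) = (a:ℝ) * (i:ℝ) := by
      exact_mod_cast congrArg (Nat.cast : ℕ → ℝ) (Nat.div_add_mod (a * i) b)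
    linarith
  set m1 := ∑ i ∈ Ico 1 k, ((h * i / k : ℕ) : ℝ) with hm1d
  set m2 := ∑ i ∈ Ico 1 k, ((h * i / k : ℕ) : ℝ)^2 with hm2d
  set sm := ∑ i ∈ Ico 1 k, (i:ℝ) * ((h * i / k : ℕ) : ℝ) with hsmd
  set sm' := ∑ j ∈ Ico 1 h, (j:ℝ) * ((k * j / h : ℕ) : ℝ) with hsm'd
  have hr1 : ∑ i ∈ Ico 1 k, ((h * i % k : ℕ) : ℝ) = ∑ i ∈ Ico 1 k, (i:ℝ) :=
    perm_sum h k h0 hk0 hcop (fun m => (m:ℝ))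
  have hr2 : ∑ i ∈ Ico 1 k, ((h * i % k : ℕ) : ℝ)^2 = ∑ i ∈ Ico 1 k, (i:ℝ)^2 :=
    perm_sum h k h0 hk0 hcop (fun m => (m:ℝ)^2)
  have key1 : ∑ i ∈ Ico 1 k, ((h * i % k : ℕ) : ℝ)
      = (h:ℝ) * (∑ i ∈ Ico 1 k, (i:ℝ)) - (k:ℝ) * m1 := by
    rw [hm1d, Finset.mul_sum, Finset.mul_sum, ← Finset.sum_sub_distrib]
    exact Finset.sum_congr rfl (fun i _ => by rw [hpt h k i]; try ring)
  have key2 : ∑ i ∈ Ico 1 k, ((h * i % k : ℕ) : ℝ)^2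
      = (h:ℝ)^2 * (∑ i ∈ Ico 1 k, (i:ℝ)^2) - 2*(h:ℝ)*(k:ℝ)*sm + (k:ℝ)^2 * m2 := by
    rw [hm2d, hsmd, Finset.mul_sum, Finset.mul_sum, Finset.mul_sum,
      ← Finset.sum_sub_distrib, ← Finset.sum_add_distrib]
    exact Finset.sum_congr rfl (fun i _ => by rw [hpt h k i]; try ring)
  have keyS1 : ∑ i ∈ Ico 1 k, (i:ℝ) * ((h * i % k : ℕ) : ℝ)
      = (h:ℝ) * (∑ i ∈ Ico 1 k, (i:ℝ)^2) - (k:ℝ) * sm := by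
    rw [hsmd, Finset.mul_sum, Finset.mul_sum, ← Finset.sum_sub_distrib]
    exact Finset.sum_congr rfl (fun i _ => by rw [hpt h k i]; try ring)
  have keyS1' : ∑ j ∈ Ico 1 h, (j:ℝ) * ((k * j % h : ℕ) : ℝ)
      = (k:ℝ) * (∑ j ∈ Ico 1 h, (j:ℝ)^2) - (h:ℝ) * sm' := by
    rw [hsm'd, Finset.mul_sum, Finset.mul_sum, ← Finset.sum_sub_distrib]
    exact Finset.sum_congr rfl (fun j _ => by rw [hpt k h j]; try ring)
  have hcross := cross_sum h k h0 hhk hcop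
  have hhalf : ∑ i ∈ Ico 1 k, ((h * i / k : ℕ) : ℝ) * (((h * i / k : ℕ) : ℝ) + 1) / 2
      = (m2 + m1) / 2 := by
    rw [hm1d, hm2d, ← Finset.sum_add_distrib, ← Finset.sum_div]
    congr 1
    exact Finset.sum_congr rfl (fun i _ => by ring)
  rw [hhalf, ← hsm'd, sum_Ico_id_real h] at hcross
  -- numeric sum values
  rw [sum_Ico_id_real k, sum_Ico_sq_real k] at *
  rw [sum_Ico_sq_real h] at keyS1'
  -- assemble
  rw [ded_eq h k hk0, ded_eq k h h0, keyS1, keyS1']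
  rw [key2] at hr2
  rw [key1] at hr1
  field_simp
  linear_combination (norm := skip) (-144:ℝ) * hr1 + (144/(k:ℝ)) * hr2
    + (-288*(k:ℝ)) * hcross
  field_simp
  ring
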